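/- Let Ω₁, Ω₂, Ω₁₂ be commuting-free linear operators on a finite-dimensional complex vector space U and α ∈ (1/t)ℤ with 0 ≤ α < 1. Consider the system on functions ψ: M² → U, where M² = {(z₁,z₂): z₁,z₂ ≠ 0, z₁ ≠ z₂}: ∂ψ/∂z₁ = ((z₂/z₁)^α (z₁−z₂)^{−1} Ω₁₂ + z₁^{−1} Ω₁) ψ, ∂ψ/∂z₂ = ((z₁/z₂)^{1−α} (z₂−z₁)^{−1} Ω₁₂ + z₂^{−1} Ω₂) ψ. After the substitution z₁ = η₁^t, z₂ = (η₁ η₂)^t, the system takes the form η_j ∂ψ/∂η_j = H_j(η₁,η₂) ψ (j = 1,2) with H_j holomorphic End(U)-valued functions near (η₁,η₂) = (0,0). -/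

import Mathlib

/-- The `N = 2` twisted KZ system has a simple singularity: let `Ω₁, Ω₂, Ω₁₂` be linear
operators on a finite-dimensional complex space `U`, `α = a/t` with `0 ≤ α < 1`, and let
`ψ` solve, on an open set `Ωs ⊆ M² = {(z₁,z₂) : z₁, z₂ ≠ 0, z₁ ≠ z₂}` (with `w` a branch
of `(z₂/z₁)^{1/t}` so that `(z₂/z₁)^α = w^a` and `(z₁/z₂)^{1-α} = w^a z₁/z₂`):
`∂ψ/∂z₁ = ((z₂/z₁)^α (z₁−z₂)⁻¹) Ω₁₂ ψ + z₁⁻¹ Ω₁ ψ`,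
`∂ψ/∂z₂ = ((z₁/z₂)^{1−α} (z₂−z₁)⁻¹) Ω₁₂ ψ + z₂⁻¹ Ω₂ ψ`.
After the substitution `z₁ = η₁^t`, `z₂ = (η₁ η₂)^t` (along which `w = η₂`), the system
takes the form `η_j ∂ψ/∂η_j = H_j(η₁,η₂) ψ` with `H₁, H₂` holomorphic near `(0,0)`. -/
theorem stmt15 (U : Type*) [NormedAddCommGroup U] [NormedSpace ℂ U]
    [FiniteDimensional ℂ U]
    (Ω₁ Ω₂ Ω₁₂ : U →L[ℂ] U)
    (t : ℕ) (ht : 0 < t) (a : ℕ) (ha : a < t)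
    (Ωs : Set (ℂ × ℂ)) (hopen : IsOpen Ωs)
    (hM : ∀ z ∈ Ωs, z.1 ≠ 0 ∧ z.2 ≠ 0 ∧ z.1 ≠ z.2)
    (ψ : ℂ × ℂ → U) (hψ : DifferentiableOn ℂ ψ Ωs)
    (w : ℂ × ℂ → ℂ) (hw : ∀ z ∈ Ωs, (w z) ^ t = z.2 / z.1)
    (hpde1 : ∀ z ∈ Ωs, fderiv ℂ ψ z (1, 0) =
      ((w z) ^ a / (z.1 - z.2)) • Ω₁₂ (ψ z) + (z.1)⁻¹ • Ω₁ (ψ z))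
    (hpde2 : ∀ z ∈ Ωs, fderiv ℂ ψ z (0, 1) =
      ((w z) ^ a * (z.1 / z.2) / (z.2 - z.1)) • Ω₁₂ (ψ z) + (z.2)⁻¹ • Ω₂ (ψ z)) :
    ∃ ε > (0 : ℝ), ∃ H₁ H₂ : ℂ × ℂ → (U →L[ℂ] U),
      DifferentiableOn ℂ H₁ (Metric.ball 0 ε) ∧
      DifferentiableOn ℂ H₂ (Metric.ball 0 ε) ∧
      ∀ η : ℂ × ℂ, η ∈ Metric.ball (0 : ℂ × ℂ) ε →
        (η.1 ^ t, (η.1 * η.2) ^ t) ∈ Ωs →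
        w (η.1 ^ t, (η.1 * η.2) ^ t) = η.2 →
        (η.1 • deriv (fun s : ℂ => ψ (s ^ t, (s * η.2) ^ t)) η.1 =
            H₁ η (ψ (η.1 ^ t, (η.1 * η.2) ^ t))) ∧
        (η.2 • deriv (fun s : ℂ => ψ (η.1 ^ t, (η.1 * s) ^ t)) η.2 =
            H₂ η (ψ (η.1 ^ t, (η.1 * η.2) ^ t))) := by
  obtain ⟨m, rfl⟩ : ∃ m, t = m + 1 := ⟨t - 1, (Nat.succ_pred_eq_of_pos ht).symm⟩
  refine ⟨1, one_pos, fun _ => ((m : ℂ) + 1) • (Ω₁ + Ω₂),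
    fun η => (((m : ℂ) + 1) * η.2 ^ a / (η.2 ^ (m + 1) - 1)) • Ω₁₂ + ((m : ℂ) + 1) • Ω₂,
    differentiableOn_const _, ?_, ?_⟩
  · refine DifferentiableOn.add ?_ (differentiableOn_const _)
    intro η hη
    have hη2 : ‖η.2‖ < 1 := lt_of_le_of_lt (norm_snd_le η) (by
      simpa [dist_eq_norm] using hη)
    have hne : η.2 ^ (m + 1) - 1 ≠ 0 := by
      intro h
      have h1 : η.2 ^ (m + 1) = 1 := by linear_combination h
      have : ‖η.2 ^ (m + 1)‖ < 1 := by
        rw [norm_pow]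
        exact pow_lt_one₀ (norm_nonneg _) hη2 (Nat.succ_ne_zero m)
      rw [h1, norm_one] at this
      exact lt_irrefl _ this
    have hA : DifferentiableAt ℂ (fun η : ℂ × ℂ => ((m : ℂ) + 1) * η.2 ^ a) η :=
      (differentiableAt_snd.pow a).const_mul _
    have hB : DifferentiableAt ℂ (fun η : ℂ × ℂ => η.2 ^ (m + 1) - 1) η :=
      (differentiableAt_snd.pow (m + 1)).sub_const 1
    have hC : DifferentiableAt ℂ
        (fun η : ℂ × ℂ => ((m : ℂ) + 1) * η.2 ^ a / (η.2 ^ (m + 1) - 1)) η := by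
      simp only [div_eq_mul_inv]
      exact hA.mul (hB.inv hne)
    exact (hC.smul_const Ω₁₂).differentiableWithinAt
  · intro η hball hz hwz
    obtain ⟨hz1, hz2, hz12⟩ := hM _ hz
    set z : ℂ × ℂ := (η.1 ^ (m + 1), (η.1 * η.2) ^ (m + 1)) with hzdef
    have hη1 : η.1 ≠ 0 := by
      intro h; exact hz1 (by simp [hzdef, h])
    have hη2 : η.2 ≠ 0 := by
      intro h; exact hz2 (by simp [hzdef, h])
    have hsub : η.1 ^ (m + 1) - (η.1 * η.2) ^ (m + 1) ≠ 0 := sub_ne_zero.mpr hz12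
    have hsub' : (η.1 * η.2) ^ (m + 1) - η.1 ^ (m + 1) ≠ 0 := sub_ne_zero.mpr (Ne.symm hz12)
    have hsub2 : η.2 ^ (m + 1) - 1 ≠ 0 := by
      intro h
      have h1 : η.2 ^ (m + 1) = 1 := by linear_combination h
      apply hz12
      show η.1 ^ (m + 1) = (η.1 * η.2) ^ (m + 1)
      rw [mul_pow, h1, mul_one]
    have hψd : DifferentiableAt ℂ ψ z := hψ.differentiableAt (hopen.mem_nhds hz)
    set D := fderiv ℂ ψ z with hD
    have key : ∀ u v : ℂ, D (u, v) = u • D (1, 0) + v • D (0, 1) := by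
      intro u v
      have huv : (u, v) = u • ((1 : ℂ), (0 : ℂ)) + v • ((0 : ℂ), (1 : ℂ)) := by
        simp [Prod.ext_iff]
      rw [huv, map_add, map_smul, map_smul]
    have e1 : D (1, 0) = (η.2 ^ a / (z.1 - z.2)) • Ω₁₂ (ψ z) + (z.1)⁻¹ • Ω₁ (ψ z) := by
      rw [hD]; rw [hpde1 _ hz, hwz]
    have e2 : D (0, 1) = (η.2 ^ a * (z.1 / z.2) / (z.2 - z.1)) • Ω₁₂ (ψ z)
        + (z.2)⁻¹ • Ω₂ (ψ z) := by
      rw [hD]; rw [hpde2 _ hz, hwz]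
    constructor
    · have hg1 : HasDerivAt (fun s : ℂ => (s ^ (m + 1), (s * η.2) ^ (m + 1)))
          ((((m : ℂ) + 1) * η.1 ^ m, ((m : ℂ) + 1) * (η.1 * η.2) ^ m * (1 * η.2))) η.1 := by
        refine HasDerivAt.prodMk ?_ ?_
        · simpa using hasDerivAt_pow (m + 1) η.1
        · simpa using ((hasDerivAt_id η.1).mul_const η.2).fun_pow (m + 1)
      have h1 : HasDerivAt (fun s : ℂ => ψ (s ^ (m + 1), (s * η.2) ^ (m + 1)))
          (D (((m : ℂ) + 1) * η.1 ^ m, ((m : ℂ) + 1) * (η.1 * η.2) ^ m * (1 * η.2))) η.1 :=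
        hψd.hasFDerivAt.comp_hasDerivAt η.1 hg1
      rw [h1.deriv, key, e1, e2]
      simp only [hzdef, ContinuousLinearMap.smul_apply, ContinuousLinearMap.add_apply]
      match_scalars
      all_goals field_simp
      all_goals ring
    · have hg2 : HasDerivAt (fun s : ℂ => ((η.1 ^ (m + 1) : ℂ), (η.1 * s) ^ (m + 1)))
          (((0 : ℂ), ((m : ℂ) + 1) * (η.1 * η.2) ^ m * (η.1 * 1))) η.2 := by
        refine HasDerivAt.prodMk (hasDerivAt_const _ _) ?_
        simpa using ((hasDerivAt_id η.2).const_mul η.1).fun_pow (m + 1)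
      have h2 : HasDerivAt (fun s : ℂ => ψ (η.1 ^ (m + 1), (η.1 * s) ^ (m + 1)))
          (D ((0 : ℂ), ((m : ℂ) + 1) * (η.1 * η.2) ^ m * (η.1 * 1))) η.2 :=
        hψd.hasFDerivAt.comp_hasDerivAt η.2 hg2
      rw [h2.deriv, key, e1, e2]
      simp only [hzdef, ContinuousLinearMap.smul_apply, ContinuousLinearMap.add_apply]
      match_scalars
      all_goals field_simp [show (η.2 * η.1) ^ (m + 1) - η.1 ^ (m + 1) ≠ 0 by rwa [mul_comm η.2 η.1]]
      all_goals ring
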